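/- Let ξ, a, b' be as follows: ξ has unit second moment, a and b' are Bernoulli with success probabilities ε and p/ε (0 < p ≤ ε < 1), all jointly independent. Set b = a·b', β = √(ε + ε²(E ξ)²/(1−ε)), and ξ_ε' = β^{−1}(a·ξ − ε(1−a)(E ξ)/(1−ε)). Then, conditionally on ξ and on the event {b = 0}: E[b'ξ_ε' | ξ, b=0] = −β^{−1} p (E ξ)/(1−p) and E[(b'ξ_ε')² | ξ, b=0] = (p/(1−p)) · β^{−2} ε (E ξ)²/(1−ε). -/

import Mathlib

open MeasureTheory ProbabilityTheory

/-- With `ξ, a, b'` jointly independent, `a`, `b'` Bernoulli of parameters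
`ε` and `p/ε` (`0 < p ≤ ε < 1`), `b = a·b'`, `β = √(ε + ε²(Eξ)²/(1−ε))` and
`ξ_ε' = β⁻¹(aξ − ε(1−a)(Eξ)/(1−ε))`, conditionally on the event `{b = 0}` (the conditional
quantities do not depend on `ξ` by independence) one has
`E[b'ξ_ε' | b=0] = −β⁻¹p(Eξ)/(1−p)` and `E[(b'ξ_ε')² | b=0] = (p/(1−p))·β⁻²ε(Eξ)²/(1−ε)`. -/
theorem stmt_15 {Ω : Type*} [MeasureSpace Ω] [IsProbabilityMeasure (ℙ : Measure Ω)]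
    (ε p : ℝ) (hp0 : 0 < p) (hpε : p ≤ ε) (hε1 : ε < 1)
    (ξ a b' : Ω → ℝ)
    (hmξ : Measurable ξ) (hma : Measurable a) (hmb : Measurable b')
    (hξint : Integrable ξ) (hξ2int : Integrable fun ω => (ξ ω) ^ 2)
    (hξ2 : ∫ ω, (ξ ω) ^ 2 = 1)
    (ha01 : ∀ ω, a ω = 0 ∨ a ω = 1)
    (haP : ℙ {ω | a ω = 1} = ENNReal.ofReal ε)
    (hb01 : ∀ ω, b' ω = 0 ∨ b' ω = 1)
    (hbP : ℙ {ω | b' ω = 1} = ENNReal.ofReal (p / ε))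
    (hindep : iIndepFun ![ξ, a, b'] ℙ) :
    (∫ ω, b' ω *
          ((Real.sqrt (ε + ε ^ 2 * (∫ ω', ξ ω') ^ 2 / (1 - ε)))⁻¹ *
            (a ω * ξ ω - ε * (1 - a ω) * (∫ ω', ξ ω') / (1 - ε)))
        ∂(ℙ[|{ω | a ω * b' ω = 0}]) =
      -((Real.sqrt (ε + ε ^ 2 * (∫ ω', ξ ω') ^ 2 / (1 - ε)))⁻¹ * p * (∫ ω', ξ ω') / (1 - p))) ∧
    (∫ ω, (b' ω *
          ((Real.sqrt (ε + ε ^ 2 * (∫ ω', ξ ω') ^ 2 / (1 - ε)))⁻¹ *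
            (a ω * ξ ω - ε * (1 - a ω) * (∫ ω', ξ ω') / (1 - ε)))) ^ 2
        ∂(ℙ[|{ω | a ω * b' ω = 0}]) =
      (p / (1 - p)) *
        ((Real.sqrt (ε + ε ^ 2 * (∫ ω', ξ ω') ^ 2 / (1 - ε)))⁻¹ ^ 2 *
          ε * (∫ ω', ξ ω') ^ 2 / (1 - ε))) := by
  have hε0 : 0 < ε := lt_of_lt_of_le hp0 hpε
  have hp1 : p < 1 := lt_of_le_of_lt hpε hε1
  set m : ℝ := ∫ ω', ξ ω' with hm
  set r : ℝ := (Real.sqrt (ε + ε ^ 2 * m ^ 2 / (1 - ε)))⁻¹ with hr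
  clear_value m r
  have h1p : (1 - p) ≠ 0 := by linarith
  have h1ε : (1 - ε) ≠ 0 := by linarith
  have hεne : ε ≠ 0 := ne_of_gt hε0
  set S : Set Ω := {ω | a ω * b' ω = 0} with hS
  set T : Set Ω := {ω | a ω = 0} ∩ {ω | b' ω = 1} with hT
  have hmS : MeasurableSet S := (hma.mul hmb) (measurableSet_singleton 0)
  have hmT : MeasurableSet T :=
    (hma (measurableSet_singleton 0)).inter (hmb (measurableSet_singleton 1))
  -- independence of a and b'
  have hab : IndepFun a b' ℙ := hindep.indepFun (i := 1) (j := 2) (by decide)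
  -- probability of T
  have hPT : ℙ T = ENNReal.ofReal ((1 - ε) * (p / ε)) := by
    have h0 : ({ω | a ω = 0} : Set Ω) = {ω | a ω = 1}ᶜ := by
      ext ω
      rcases ha01 ω with h | h <;> simp [h]
    have hP0 : ℙ {ω | a ω = 0} = ENNReal.ofReal (1 - ε) := by
      rw [h0, prob_compl_eq_one_sub (s := {ω | a ω = 1})
        (hma (measurableSet_singleton 1)), haP,
        ← ENNReal.ofReal_one, ← ENNReal.ofReal_sub _ hε0.le]
    have := hab.measure_inter_preimage_eq_mul {0} {1}
      (measurableSet_singleton (0 : ℝ)) (measurableSet_singleton (1 : ℝ))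
    have hTeq : T = a ⁻¹' {0} ∩ b' ⁻¹' {1} := rfl
    rw [hTeq, this]
    have : (a ⁻¹' {0} : Set Ω) = {ω | a ω = 0} := rfl
    rw [this, hP0]
    have : (b' ⁻¹' {1} : Set Ω) = {ω | b' ω = 1} := rfl
    rw [this, hbP, ← ENNReal.ofReal_mul (by linarith)]
  -- probability of S
  have hPS : ℙ S = ENNReal.ofReal (1 - p) := by
    have hSc : S = ({ω | a ω = 1} ∩ {ω | b' ω = 1})ᶜ := by
      ext ω
      rcases ha01 ω with h | h <;> rcases hb01 ω with h' | h' <;>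
        simp [hS, h, h']
    have hPint : ℙ ({ω | a ω = 1} ∩ {ω | b' ω = 1}) = ENNReal.ofReal p := by
      have := hab.measure_inter_preimage_eq_mul {1} {1}
        (measurableSet_singleton (1 : ℝ)) (measurableSet_singleton (1 : ℝ))
      have h1 : ({ω | a ω = 1} ∩ {ω | b' ω = 1} : Set Ω) = a ⁻¹' {1} ∩ b' ⁻¹' {1} := rfl
      rw [h1, this]
      show ℙ {ω | a ω = 1} * ℙ {ω | b' ω = 1} = _
      rw [haP, hbP, ← ENNReal.ofReal_mul hε0.le]
      congr 1
      field_simp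
    rw [hSc, prob_compl_eq_one_sub (s := {ω | a ω = 1} ∩ {ω | b' ω = 1})
      ((hma (measurableSet_singleton 1)).inter (hmb (measurableSet_singleton 1))),
      hPint, ← ENNReal.ofReal_one, ← ENNReal.ofReal_sub _ hp0.le]
  have hPSreal : (ℙ S).toReal = 1 - p := by rw [hPS]; exact ENNReal.toReal_ofReal (by linarith)
  have hPTreal : (ℙ T).toReal = (1 - ε) * (p / ε) := by
    rw [hPT]
    exact ENNReal.toReal_ofReal (mul_nonneg (by linarith) (by positivity))
  -- generic computation of conditional integral
  have key : ∀ (f : Ω → ℝ) (c : ℝ),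
      (∀ ω, S.indicator f ω = T.indicator (fun _ => c) ω) →
      ∫ ω, f ω ∂(ℙ[|S]) = (1 - p)⁻¹ * ((1 - ε) * (p / ε) * c) := by
    intro f c hfc
    rw [ProbabilityTheory.cond, integral_smul_measure, ← integral_indicator hmS,
      funext hfc, integral_indicator hmT, setIntegral_const, ENNReal.toReal_inv,
      hPSreal, measureReal_def, hPTreal, smul_eq_mul, smul_eq_mul]
  set c : ℝ := -(r * ε * m / (1 - ε)) with hc
  have goal1 : (1 - p)⁻¹ * ((1 - ε) * (p / ε) * c) = -(r * p * m / (1 - p)) := by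
    rw [hc]; field_simp
  have goal2 : (1 - p)⁻¹ * ((1 - ε) * (p / ε) * c ^ 2) =
      p / (1 - p) * (r ^ 2 * ε * m ^ 2 / (1 - ε)) := by
    rw [hc]; field_simp
  constructor
  · rw [key _ c ?_]
    · exact goal1
    · intro ω
      rcases hb01 ω with hb | hb
      · rcases ha01 ω with ha | ha <;>
          simp [Set.indicator_apply, hS, hT, ha, hb]
      · rcases ha01 ω with ha | ha
        · have hωS : ω ∈ S := by simp [hS, ha]
          have hωT : ω ∈ T := ⟨ha, hb⟩
          rw [Set.indicator_of_mem hωS, Set.indicator_of_mem hωT, hc, ha, hb]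
          ring
        · have hωS : ω ∉ S := by simp [hS, ha, hb]
          have hωT : ω ∉ T := by simp [hT, ha]
          rw [Set.indicator_of_notMem hωS, Set.indicator_of_notMem hωT]
  · rw [key _ (c ^ 2) ?_]
    · exact goal2
    · intro ω
      rcases hb01 ω with hb | hb
      · rcases ha01 ω with ha | ha <;>
          simp [Set.indicator_apply, hS, hT, ha, hb]
      · rcases ha01 ω with ha | ha
        · have hωS : ω ∈ S := by simp [hS, ha]
          have hωT : ω ∈ T := ⟨ha, hb⟩
          rw [Set.indicator_of_mem hωS, Set.indicator_of_mem hωT, hc, ha, hb]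
          ring
        · have hωS : ω ∉ S := by simp [hS, ha, hb]
          have hωT : ω ∉ T := by simp [hT, ha]
          rw [Set.indicator_of_notMem hωS, Set.indicator_of_notMem hωT]
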